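/- Let k be even, k ≥ 2, and Δ(a,b) = Σ_{i+j < k/2} 4^{i+j}·B(a_{2i+1},a_{2i},a_{2i−1})·B(b_{2j+1},b_{2j},b_{2j−1}) with a_{−1}=b_{−1}=0. If a_j = b_j = 1−(j mod 2) for all j (pattern 010...101), then Δ(a,b) = ((3k−2)·2^k + 2)/18. -/

import Mathlib

/-- Booth encoding function `B(x,y,z) = -2x + y + z`. -/
def BoothB (x y z : ℤ) : ℤ := -2 * x + y + z

/-- The `i`-th Booth Radix-4 digit of the bit-vector `a` (bits indexed by `ℤ`,
with the convention that `a (-1) = 0` is imposed as a hypothesis). -/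
def BoothDig (a : ℤ → ℤ) (i : ℕ) : ℤ :=
  BoothB (a (2 * (i : ℤ) + 1)) (a (2 * (i : ℤ))) (a (2 * (i : ℤ) - 1))

/-- The truncation error `Δ(a,b)` of a double Booth Radix-4 partial product array:
the sum of `4^(i+j) · B(a_{2i+1},a_{2i},a_{2i-1}) · B(b_{2j+1},b_{2j},b_{2j-1})`
over all `i, j ≥ 0` with `i + j < k/2`. -/
def Delta (k : ℕ) (a b : ℤ → ℤ) : ℤ :=
  ∑ p ∈ (Finset.range (k / 2) ×ˢ Finset.range (k / 2)).filter
      (fun p => p.1 + p.2 < k / 2),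
    4 ^ (p.1 + p.2) * BoothDig a p.1 * BoothDig b p.2

lemma boothdig_one (a : ℤ → ℤ) (ham1 : a (-1) = 0)
    (ha : ∀ j : ℤ, 0 ≤ j → a j = 1 - j % 2) (i : ℕ) : BoothDig a i = 1 := by
  unfold BoothDig BoothB
  rcases Nat.eq_zero_or_pos i with h | h
  · subst h
    have e1 : (2 * ((0:ℕ):ℤ) + 1) = 1 := by norm_num
    have e2 : (2 * ((0:ℕ):ℤ)) = 0 := by norm_num
    have e3 : (2 * ((0:ℕ):ℤ) - 1) = -1 := by norm_num
    rw [e1, e3, e2, ha 1 (by norm_num), ha 0 (by norm_num), ham1]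
    norm_num
  · have h1 : (0:ℤ) ≤ 2 * i + 1 := by positivity
    have h2 : (0:ℤ) ≤ 2 * i := by positivity
    have h3 : (0:ℤ) ≤ 2 * i - 1 := by
      have : (1:ℤ) ≤ i := by exact_mod_cast h
      linarith
    rw [ha _ h1, ha _ h2, ha _ h3]
    omega

lemma triangle_eq (m : ℕ) :
    (Finset.range m ×ˢ Finset.range m).filter (fun p => p.1 + p.2 < m)
      = (Finset.range m).biUnion (fun s => Finset.HasAntidiagonal.antidiagonal s) := by
  ext p
  simp only [Finset.mem_filter, Finset.mem_product, Finset.mem_range,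
    Finset.mem_biUnion, Finset.HasAntidiagonal.mem_antidiagonal]
  constructor
  · rintro ⟨⟨_, _⟩, h⟩; exact ⟨p.1 + p.2, h, rfl⟩
  · rintro ⟨s, hs, rfl⟩; omega

lemma sum_range_geom (m : ℕ) :
    ∑ s ∈ Finset.range m, ((s : ℚ) + 1) * 4 ^ s = ((3 * m - 1) * 4 ^ m + 1) / 9 := by
  induction m with
  | zero => norm_num
  | succ n ih =>
    rw [Finset.sum_range_succ, ih]
    push_cast
    ring

/-- Both `a` and `b` with pattern `010...101` (bit `j` set iff `j` is even):
`Δ(a,b) = ((3k - 2)·2^k + 2)/18`. -/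
theorem delta_0101_vs_0101 (k : ℕ) (hk : Even k) (hk2 : 2 ≤ k)
    (a b : ℤ → ℤ) (ham1 : a (-1) = 0) (hbm1 : b (-1) = 0)
    (ha : ∀ j : ℤ, 0 ≤ j → a j = 1 - j % 2) (hb : ∀ j : ℤ, 0 ≤ j → b j = 1 - j % 2) :
    (Delta k a b : ℚ) = ((3 * (k : ℚ) - 2) * 2 ^ k + 2) / 18 := by
  obtain ⟨m, rfl⟩ : ∃ m, k = 2 * m := hk.exists_two_nsmul k |>.imp fun m h => by
    simpa [two_nsmul, two_mul] using h
  have hm : (2 * m) / 2 = m := by omega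
  have hD : Delta (2 * m) a b
      = ∑ p ∈ (Finset.range m ×ˢ Finset.range m).filter (fun p => p.1 + p.2 < m),
        4 ^ (p.1 + p.2) := by
    unfold Delta
    rw [hm]
    apply Finset.sum_congr rfl
    intro p _
    rw [boothdig_one a ham1 ha, boothdig_one b hbm1 hb]
    ring
  rw [hD]
  push_cast
  rw [triangle_eq]
  rw [Finset.sum_biUnion (by
    intro x _ y _ hxy
    apply Finset.disjoint_left.mpr
    intro p hp hq
    simp only [Finset.HasAntidiagonal.mem_antidiagonal] at hp hq
    omega)]
  have : ∀ s ∈ Finset.range m,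
      ∑ p ∈ Finset.HasAntidiagonal.antidiagonal s, (4:ℚ) ^ (p.1 + p.2) = ((s:ℚ) + 1) * 4 ^ s := by
    intro s _
    rw [Finset.sum_congr rfl (fun p hp => by
      rw [Finset.HasAntidiagonal.mem_antidiagonal.mp hp])]
    simp [Finset.Nat.card_antidiagonal, mul_comm]
  rw [Finset.sum_congr rfl this, sum_range_geom]
  have h4 : (4:ℚ) ^ m = 2 ^ (2 * m) := by
    rw [pow_mul]; norm_num
  rw [h4]
  ring
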